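/- Let P₁ be the self-similar (Cantor) measure on ℝ satisfying P₁ = (1/2)P₁∘S₁⁻¹ + (1/2)P₁∘S₂⁻¹, where S₁(x) = x/3 and S₂(x) = x/3 + 1/3. Then the expectation of P₁ is 1/4, the variance of P₁ is 1/32, and for every x₀ ∈ ℝ, ∫(x − x₀)² dP₁(x) = 1/32 + (x₀ − 1/4)². -/

import Mathlib

open MeasureTheory Set Filter Real
open scoped ENNReal
open scoped Topology

/-- Distortion error of a finite set of quantizers `γ` for the measure `P`. -/
noncomputable def distortion (P : Measure ℝ) (γ : Finset ℝ) : ℝ :=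
  ∫ x, (⨅ c : γ, (x - (c : ℝ)) ^ 2) ∂P

/-- The `n`-th quantization error of `P`. -/
noncomputable def quantErr (P : Measure ℝ) (n : ℕ) : ℝ :=
  sInf {v : ℝ | ∃ γ : Finset ℝ, γ.Nonempty ∧ γ.card ≤ n ∧ v = distortion P γ}

/-- `γ` is an optimal set of `n`-means for `P`. -/
def IsOptimalSet (P : Measure ℝ) (n : ℕ) (γ : Finset ℝ) : Prop :=
  γ.Nonempty ∧ γ.card ≤ n ∧ distortion P γ = quantErr P n

/-- Uniform distribution on `[a, b]`. -/
noncomputable def unif (a b : ℝ) : Measure ℝ :=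
  (ENNReal.ofReal (b - a))⁻¹ • (volume.restrict (Icc a b))

/-- The uniform discrete measure on `{2/3, 5/6, 1}`. -/
noncomputable def discD : Measure ℝ :=
  (3 : ℝ≥0∞)⁻¹ • (Measure.dirac (2/3) + Measure.dirac (5/6) + Measure.dirac 1)

/-- Mixture `(1/2)P₁ + (1/2)P₂`. -/
noncomputable def mix (P₁ P₂ : Measure ℝ) : Measure ℝ :=
  (2 : ℝ≥0∞)⁻¹ • P₁ + (2 : ℝ≥0∞)⁻¹ • P₂



theorem ae_mem_Icc (P₁ : Measure ℝ) [IsProbabilityMeasure P₁]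
    (hP₁ : P₁ = (2 : ℝ≥0∞)⁻¹ • P₁.map (fun x => x / 3) +
      (2 : ℝ≥0∞)⁻¹ • P₁.map (fun x => x / 3 + 1/3)) :
    ∀ᵐ x ∂P₁, x ∈ Icc (0:ℝ) (1/2) := by
  have hg₁ : Measurable (fun x : ℝ => x / 3) := measurable_id.div_const 3
  have hg₂ : Measurable (fun x : ℝ => x / 3 + 1/3) := hg₁.add_const _
  have hfin : ∀ s : Set ℝ, P₁ s ≠ ∞ := fun s => measure_ne_top _ _
  -- apply lemma for Ioi
  have happI : ∀ a : ℝ, P₁ (Ioi a) = 2⁻¹ * P₁ (Ioi (3*a)) + 2⁻¹ * P₁ (Ioi (3*a-1)) := by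
    intro a
    have h1 : (fun x : ℝ => x / 3) ⁻¹' Ioi a = Ioi (3*a) := by
      ext x; simp only [mem_preimage, mem_Ioi]; constructor <;> intro <;> linarith
    have h2 : (fun x : ℝ => x / 3 + 1/3) ⁻¹' Ioi a = Ioi (3*a-1) := by
      ext x; simp only [mem_preimage, mem_Ioi]; constructor <;> intro <;> linarith
    conv_lhs => rw [hP₁]
    rw [Measure.add_apply, Measure.smul_apply, Measure.smul_apply,
      Measure.map_apply hg₁ measurableSet_Ioi, Measure.map_apply hg₂ measurableSet_Ioi,
      h1, h2, smul_eq_mul, smul_eq_mul]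
  have happJ : ∀ a : ℝ, P₁ (Iio a) = 2⁻¹ * P₁ (Iio (3*a)) + 2⁻¹ * P₁ (Iio (3*a-1)) := by
    intro a
    have h1 : (fun x : ℝ => x / 3) ⁻¹' Iio a = Iio (3*a) := by
      ext x; simp only [mem_preimage, mem_Iio]; constructor <;> intro <;> linarith
    have h2 : (fun x : ℝ => x / 3 + 1/3) ⁻¹' Iio a = Iio (3*a-1) := by
      ext x; simp only [mem_preimage, mem_Iio]; constructor <;> intro <;> linarith
    conv_lhs => rw [hP₁]
    rw [Measure.add_apply, Measure.smul_apply, Measure.smul_apply,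
      Measure.map_apply hg₁ measurableSet_Iio, Measure.map_apply hg₂ measurableSet_Iio,
      h1, h2, smul_eq_mul, smul_eq_mul]
  have toRealize : ∀ a b c : ℝ, ∀ (h : P₁ (Ioi a) = 2⁻¹ * P₁ (Ioi b) + 2⁻¹ * P₁ (Ioi c)), True := by
    intro _ _ _ _; trivial
  -- right side
  have hstepR : ∀ a : ℝ, 1/2 ≤ a → P₁ (Ioi (3*a)) = P₁ (Ioi a) := by
    intro a ha
    have h := happI a
    have hw : P₁ (Ioi (3*a)) ≤ P₁ (Ioi (3*a-1)) := measure_mono (Ioi_subset_Ioi (by linarith))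
    have hu : P₁ (Ioi (3*a-1)) ≤ P₁ (Ioi a) := measure_mono (Ioi_subset_Ioi (by linarith))
    have hr := congrArg ENNReal.toReal h
    rw [ENNReal.toReal_add (by finiteness) (by finiteness), ENNReal.toReal_mul,
      ENNReal.toReal_mul] at hr
    simp only [ENNReal.toReal_inv, ENNReal.toReal_ofNat] at hr
    have hwr := (ENNReal.toReal_le_toReal (hfin _) (hfin _)).mpr hw
    have hur := (ENNReal.toReal_le_toReal (hfin _) (hfin _)).mpr hu
    exact (ENNReal.toReal_eq_toReal_iff' (hfin _) (hfin _)).mp (by linarith)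
  have hstepL : ∀ a : ℝ, a ≤ 0 → P₁ (Iio (3*a-1)) = P₁ (Iio a) := by
    intro a ha
    have h := happJ a
    have hw : P₁ (Iio (3*a-1)) ≤ P₁ (Iio (3*a)) := measure_mono (Iio_subset_Iio (by linarith))
    have hu : P₁ (Iio (3*a)) ≤ P₁ (Iio a) := measure_mono (Iio_subset_Iio (by linarith))
    have hr := congrArg ENNReal.toReal h
    rw [ENNReal.toReal_add (by finiteness) (by finiteness), ENNReal.toReal_mul,
      ENNReal.toReal_mul] at hr
    simp only [ENNReal.toReal_inv, ENNReal.toReal_ofNat] at hr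
    have hwr := (ENNReal.toReal_le_toReal (hfin _) (hfin _)).mpr hw
    have hur := (ENNReal.toReal_le_toReal (hfin _) (hfin _)).mpr hu
    exact (ENNReal.toReal_eq_toReal_iff' (hfin _) (hfin _)).mp (by linarith)
  have hright : P₁ (Ioi (1/2 : ℝ)) = 0 := by
    set s : ℕ → Set ℝ := fun n => Ioi ((3:ℝ)^n / 2) with hs
    have hsn : ∀ n, P₁ (s n) = P₁ (Ioi (1/2)) := by
      intro n; induction n with
      | zero => simp [hs]
      | succ n ih =>
        rw [← ih]
        have h3 : (3:ℝ)^(n+1)/2 = 3 * ((3:ℝ)^n/2) := by ring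
        have h1 : (1:ℝ) ≤ 3^n := one_le_pow₀ (by norm_num)
        simp only [hs, h3]
        exact hstepR _ (by linarith)
    have hanti : Antitone s := by
      intro n m hnm
      exact Ioi_subset_Ioi (by
        have := pow_le_pow_right₀ (by norm_num : (1:ℝ) ≤ 3) hnm
        linarith)
    have hmeas : ∀ n, NullMeasurableSet (s n) P₁ :=
      fun n => measurableSet_Ioi.nullMeasurableSet
    have htend := tendsto_measure_iInter_atTop hmeas hanti ⟨0, hfin _⟩
    have hempty : ⋂ n, s n = ∅ := by
      ext x; simp only [mem_iInter, mem_empty_iff_false, iff_false, not_forall]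
      obtain ⟨n, hn⟩ := pow_unbounded_of_one_lt (2*x) (by norm_num : (1:ℝ) < 3)
      exact ⟨n, by simp [hs, mem_Ioi]; linarith⟩
    rw [hempty, measure_empty] at htend
    have : Tendsto (P₁ ∘ s) atTop (𝓝 (P₁ (Ioi (1/2)))) := by
      simp only [Function.comp_def, hsn]; exact tendsto_const_nhds
    exact tendsto_nhds_unique this htend
  have hleft : P₁ (Iio (0 : ℝ)) = 0 := by
    set a : ℕ → ℝ := fun n => Nat.rec 0 (fun _ x => 3*x - 1) n with ha
    have ha0 : ∀ n, a n ≤ 0 := by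
      intro n; induction n with
      | zero => simp [ha]
      | succ n ih => show 3 * a n - 1 ≤ 0; linarith
    have han : ∀ n, a n ≤ -n := by
      intro n; induction n with
      | zero => simp [ha]
      | succ n ih =>
        show 3 * a n - 1 ≤ -(n+1:ℕ)
        have := ha0 n
        push_cast; linarith
    have hsn : ∀ n, P₁ (Iio (a n)) = P₁ (Iio 0) := by
      intro n; induction n with
      | zero => simp [ha]
      | succ n ih => rw [← ih]; exact hstepL _ (ha0 n)
    set s : ℕ → Set ℝ := fun n => Iio (-(n:ℝ) ) ∪ Iio (a n) with hs
    -- simpler: P₁ (Iio 0) ≤ P₁ (Iio (-n)) fails; instead use s n := Iio (a n)? not antitone necessarily... it is: a (n+1) = 3 a n - 1 ≤ a n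
    clear hs s
    have hmono : ∀ n, a (n+1) ≤ a n := by
      intro n; have := ha0 n; show 3 * a n - 1 ≤ a n; linarith
    have hanti : Antitone (fun n => Iio (a n)) := by
      intro n m hnm
      refine Iio_subset_Iio ?_
      induction hnm with
      | refl => exact le_rfl
      | step h ih => exact le_trans (hmono _) ih
    have hmeas : ∀ n, NullMeasurableSet (Iio (a n)) P₁ :=
      fun n => measurableSet_Iio.nullMeasurableSet
    have htend := tendsto_measure_iInter_atTop hmeas hanti ⟨0, hfin _⟩
    have hempty : ⋂ n, Iio (a n) = ∅ := by
      ext x; simp only [mem_iInter, mem_empty_iff_false, iff_false, not_forall]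
      obtain ⟨n, hn⟩ := exists_nat_gt (-x)
      refine ⟨n, ?_⟩
      have := han n
      simp only [mem_Iio, not_lt]
      linarith
    rw [hempty, measure_empty] at htend
    have hconst : Tendsto (P₁ ∘ fun n => Iio (a n)) atTop (𝓝 (P₁ (Iio 0))) := by
      simp only [Function.comp_def, hsn]; exact tendsto_const_nhds
    exact tendsto_nhds_unique hconst htend
  have : P₁ (Icc (0:ℝ) (1/2))ᶜ = 0 := by
    have hsub : (Icc (0:ℝ) (1/2))ᶜ ⊆ Iio 0 ∪ Ioi (1/2) := by
      intro x hx
      simp only [mem_compl_iff, mem_Icc, not_and_or, not_le] at hx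
      rcases hx with h | h
      · exact Or.inl h
      · exact Or.inr h
    exact measure_mono_null hsub (measure_union_null hleft hright)
  exact mem_ae_iff.mpr this


theorem intCont (P₁ : Measure ℝ) [IsProbabilityMeasure P₁]
    (hae : ∀ᵐ x ∂P₁, x ∈ Icc (0:ℝ) (1/2)) (f : ℝ → ℝ) (hf : Continuous f) :
    Integrable f P₁ := by
  obtain ⟨C, hC⟩ := (isCompact_Icc (a := (0:ℝ)) (b := 1/2)).exists_bound_of_continuousOn
    hf.continuousOn
  refine (integrable_const C).mono' hf.aestronglyMeasurable ?_
  filter_upwards [hae] with x hx using hC x hx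

theorem key (P₁ : Measure ℝ) [IsProbabilityMeasure P₁]
    (hP₁ : P₁ = (2 : ℝ≥0∞)⁻¹ • P₁.map (fun x => x / 3) +
      (2 : ℝ≥0∞)⁻¹ • P₁.map (fun x => x / 3 + 1/3))
    (hae : ∀ᵐ x ∂P₁, x ∈ Icc (0:ℝ) (1/2)) (f : ℝ → ℝ) (hf : Continuous f) :
    ∫ x, f x ∂P₁ = (1/2) * ∫ x, f (x/3) ∂P₁ + (1/2) * ∫ x, f (x/3 + 1/3) ∂P₁ := by
  have hg₁ : Measurable (fun x : ℝ => x / 3) := measurable_id.div_const 3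
  have hg₂ : Measurable (fun x : ℝ => x / 3 + 1/3) := hg₁.add_const _
  have hi₁ : Integrable f (P₁.map (fun x => x / 3)) := by
    rw [integrable_map_measure hf.aestronglyMeasurable hg₁.aemeasurable]
    exact intCont P₁ hae _ (hf.comp (continuous_id.div_const 3))
  have hi₂ : Integrable f (P₁.map (fun x => x / 3 + 1/3)) := by
    rw [integrable_map_measure hf.aestronglyMeasurable hg₂.aemeasurable]
    exact intCont P₁ hae _ (hf.comp ((continuous_id.div_const 3).add continuous_const))
  conv_lhs => rw [hP₁]
  rw [integral_add_measure (hi₁.smul_measure (by norm_num)) (hi₂.smul_measure (by norm_num)),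
    integral_smul_measure, integral_smul_measure,
    integral_map hg₁.aemeasurable hf.aestronglyMeasurable,
    integral_map hg₂.aemeasurable hf.aestronglyMeasurable]
  norm_num [ENNReal.toReal_inv]


theorem stmt9 (P₁ : Measure ℝ) [IsProbabilityMeasure P₁]
    (hP₁ : P₁ = (2 : ℝ≥0∞)⁻¹ • P₁.map (fun x => x / 3) +
      (2 : ℝ≥0∞)⁻¹ • P₁.map (fun x => x / 3 + 1/3)) :
    (∫ x, x ∂P₁) = 1/4 ∧ (∫ x, x ^ 2 ∂P₁) - (∫ x, x ∂P₁) ^ 2 = 1/32 ∧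
    ∀ x₀ : ℝ, (∫ x, (x - x₀) ^ 2 ∂P₁) = 1/32 + (x₀ - 1/4) ^ 2 := by
  have hae := ae_mem_Icc P₁ hP₁
  have hix : Integrable (fun x : ℝ => x) P₁ := intCont P₁ hae _ continuous_id
  have hix2 : Integrable (fun x : ℝ => x ^ 2) P₁ := intCont P₁ hae _ (continuous_pow 2)
  -- first moment
  have h1 : ∫ x, x ∂P₁ = 1/4 := by
    have h := key P₁ hP₁ hae (fun x => x) continuous_id
    rw [integral_div] at h
    have he : ∀ x : ℝ, x/3 + 1/3 = x/3 + 1/3 := fun _ => rfl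
    rw [integral_add (hix.div_const 3) (integrable_const (1/3)), integral_div,
      integral_const] at h
    simp only [probReal_univ, smul_eq_mul, one_mul] at h
    linarith
  -- second moment
  have h2 : ∫ x, x ^ 2 ∂P₁ = 3/32 := by
    have h := key P₁ hP₁ hae (fun x => x ^ 2) (continuous_pow 2)
    have e1 : (fun x : ℝ => (x/3) ^ 2) = fun x : ℝ => x ^ 2 / 9 := by
      funext x; ring
    have e2 : (fun x : ℝ => (x/3 + 1/3) ^ 2) = fun x : ℝ => x ^ 2 / 9 + (2/9 * x + 1/9) := by
      funext x; ring
    have hga : Integrable (fun x : ℝ => 2/9 * x + 1/9) P₁ :=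
      (hix.const_mul (2/9)).add (integrable_const (1/9))
    rw [e1, e2, integral_div,
      integral_add (hix2.div_const 9) hga,
      integral_div,
      integral_add (hix.const_mul (2/9)) (integrable_const (1/9)),
      integral_const_mul, integral_const] at h
    simp only [probReal_univ, smul_eq_mul, one_mul] at h
    rw [h1] at h
    linarith
  refine ⟨h1, by rw [h1, h2]; norm_num, ?_⟩
  intro x₀
  have e : (fun x : ℝ => (x - x₀) ^ 2) = fun x : ℝ => x ^ 2 + (-(2*x₀) * x + x₀ ^ 2) := by
    funext x; ring
  have hga : Integrable (fun x : ℝ => -(2*x₀) * x + x₀ ^ 2) P₁ :=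
    (hix.const_mul _).add (integrable_const _)
  rw [e, integral_add hix2 hga,
    integral_add (hix.const_mul _) (integrable_const _), integral_const_mul, integral_const]
  simp only [probReal_univ, smul_eq_mul, one_mul]
  rw [h1, h2]; ring
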